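/- Let C be a d-clutter on a finite vertex set V with C not complete. Let Δ = ⟨C⟩ and Γ = ⟨C^∨⟩, and let v ∈ V be a shedding vertex of Γ. Set D = Facets(link_Δ(v)), a (d−1)-dimensional uniform clutter on V \ {v}. Then ⟨D^∨⟩ = Γ − v, where D^∨ is computed on the vertex set V \ {v}. -/

import Mathlib

namespace ClutterPaper

variable {α : Type*} [DecidableEq α]

/-- `C` is a uniform clutter on vertex set `V` all of whose circuits have cardinality `c`
(i.e. a `(c-1)`-dimensional uniform clutter). -/
def IsClutter (V : Finset α) (c : ℕ) (C : Finset (Finset α)) : Prop :=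
  ∀ F ∈ C, F ⊆ V ∧ F.card = c

/-- The complement clutter `C̄`: all `c`-subsets of `V` not in `C`. -/
def compClutter (V : Finset α) (c : ℕ) (C : Finset (Finset α)) : Finset (Finset α) :=
  V.powersetCard c \ C

/-- `C^∨ = { V \ F | F ∈ C̄ }`. -/
def clutterDual (V : Finset α) (c : ℕ) (C : Finset (Finset α)) : Finset (Finset α) :=
  (compClutter V c C).image fun F => V \ F

/-- `A` is a clique of the clutter `C` (with circuit cardinality `c`) on vertex set `V`:
all `c`-subsets of `A` are circuits. -/
def IsClique (V : Finset α) (c : ℕ) (C : Finset (Finset α)) (A : Finset α) : Prop :=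
  A ⊆ V ∧ ∀ F ⊆ A, F.card = c → F ∈ C

/-- The closed neighborhood `N_C[e] = e ∪ { v ∈ V | e ∪ {v} ∈ C }`. -/
def closedNbhd (V : Finset α) (C : Finset (Finset α)) (e : Finset α) : Finset α :=
  e ∪ V.filter fun v => insert v e ∈ C

/-- `e` is a maximal subcircuit of the clutter `C` with circuit cardinality `c`:
`e` has cardinality `c - 1` and is contained in some circuit. -/
def IsMS (c : ℕ) (C : Finset (Finset α)) (e : Finset α) : Prop :=
  e.card + 1 = c ∧ ∃ F ∈ C, e ⊆ F

/-- `e` is a simplicial maximal subcircuit: a maximal subcircuit whose closed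
neighborhood is a clique. -/
def IsSMS (V : Finset α) (c : ℕ) (C : Finset (Finset α)) (e : Finset α) : Prop :=
  IsMS c C e ∧ IsClique V c C (closedNbhd V C e)

/-- `e` is a free maximal subcircuit: contained in exactly one circuit. -/
def IsFreeMS (c : ℕ) (C : Finset (Finset α)) (e : Finset α) : Prop :=
  e.card + 1 = c ∧ ∃! F, F ∈ C ∧ e ⊆ F

/-- Deletion `C − e` of a maximal subcircuit: the circuits not containing `e`. -/
def delMS (C : Finset (Finset α)) (e : Finset α) : Finset (Finset α) :=
  C.filter fun F => ¬ e ⊆ F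

/-- Deletion of a vertex: circuits (or faces) not containing `v`. -/
def delVert (C : Finset (Finset α)) (v : α) : Finset (Finset α) :=
  C.filter fun F => v ∉ F

/-- Chordality of a uniform clutter (circuit cardinality `c`) on `V`: there is a sequence of
deletions of simplicial maximal subcircuits ending in the clutter with no circuits. -/
inductive Chordal (V : Finset α) (c : ℕ) : Finset (Finset α) → Prop
  | empty : Chordal V c ∅
  | step {C : Finset (Finset α)} (e : Finset α) :
      IsSMS V c C e → Chordal V c (delMS C e) → Chordal V c C

/-- The ascent `C⁺` of a clutter with circuit cardinality `c`: all `(c+1)`-subsets of `V`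
that are cliques of `C`. -/
def ascent (V : Finset α) (c : ℕ) (C : Finset (Finset α)) : Finset (Finset α) :=
  (V.powersetCard (c + 1)).filter fun A => A.powersetCard c ⊆ C

/-- The simplicial complex `⟨D⟩` generated by a clutter `D`: all subsets of its elements. -/
def complexOf (D : Finset (Finset α)) : Finset (Finset α) :=
  D.biUnion Finset.powerset

/-- A family of finsets is a simplicial complex if it is downward closed. -/
def IsComplex (Δ : Finset (Finset α)) : Prop :=
  ∀ F ∈ Δ, ∀ G ⊆ F, G ∈ Δ

/-- The facets (maximal faces) of a simplicial complex. -/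
def facets (Δ : Finset (Finset α)) : Finset (Finset α) :=
  Δ.filter fun F => ∀ G ∈ Δ, F ⊆ G → F = G

/-- `link_Δ(v) = { F \ {v} | v ∈ F ∈ Δ }`. -/
def link (Δ : Finset (Finset α)) (v : α) : Finset (Finset α) :=
  (Δ.filter fun F => v ∈ F).image fun F => F.erase v

/-- `v` is a shedding vertex of `Δ`: no face of `link_Δ(v)` is a facet of `Δ − v`. -/
def Shedding (Δ : Finset (Finset α)) (v : α) : Prop :=
  ∀ F ∈ link Δ v, F ∉ facets (delVert Δ v)

/-- Alexander dual of a simplicial complex on vertex set `V`: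
`Δ^∨ = { V \ F | F ⊆ V, F ∉ Δ }`. -/
def alexDual (V : Finset α) (Δ : Finset (Finset α)) : Finset (Finset α) :=
  (V.powerset.filter fun F => F ∉ Δ).image fun F => V \ F

/-- `Δ` is pure with all facets of cardinality `c` (dimension `c - 1`), and nonempty. -/
def PureDim (Δ : Finset (Finset α)) (c : ℕ) : Prop :=
  Δ.Nonempty ∧ ∀ F ∈ facets Δ, F.card = c

/-- Vertex decomposability of a simplicial complex. -/
inductive VDecomp : Finset (Finset α) → Prop
  | simplex {Δ : Finset (Finset α)} : (facets Δ).card = 1 → VDecomp Δ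
  | shed {Δ : Finset (Finset α)} (v : α) : Shedding Δ v →
      VDecomp (link Δ v) → VDecomp (delVert Δ v) → VDecomp Δ

/-- The vertex set of a clutter (or of the complex it generates). -/
def vertexSet (Ω : Finset (Finset α)) : Finset α :=
  Ω.biUnion id

/-- `Ω` (given by its set of facets, each of cardinality `d+1`) is a `d`-cycle:
nonempty, pure of dimension `d`, `d`-path connected, and every `(d-1)`-dimensional
face lies in an even number of `d`-faces. -/
def IsCycle (d : ℕ) (Ω : Finset (Finset α)) : Prop :=
  Ω.Nonempty ∧ (∀ F ∈ Ω, F.card = d + 1) ∧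
    (∀ F ∈ Ω, ∀ G ∈ Ω,
      Relation.ReflTransGen (fun A B => A ∈ Ω ∧ B ∈ Ω ∧ (A ∩ B).card = d) F G) ∧
    ∀ e : Finset α, e.card = d → Even ((Ω.filter fun F => e ⊆ F).card)

/-- A face-minimal `d`-cycle: no `d`-cycle has a strictly smaller set of `d`-faces. -/
def FaceMinimalCycle (d : ℕ) (Ω : Finset (Finset α)) : Prop :=
  IsCycle d Ω ∧ ∀ Ω' : Finset (Finset α), IsCycle d Ω' → Ω' ⊆ Ω → Ω' = Ω

/-- `Ω` is `d`-complete: it contains every `(d+1)`-subset of its vertex set. -/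
def DComplete (d : ℕ) (Ω : Finset (Finset α)) : Prop :=
  ∀ F ⊆ vertexSet Ω, F.card = d + 1 → F ∈ Ω

/-- The complex `⟨C⟩` generated by the `d`-dimensional clutter `C` is `d`-chorded. -/
def Chorded (d : ℕ) (C : Finset (Finset α)) : Prop :=
  ∀ Ω : Finset (Finset α), FaceMinimalCycle d Ω → Ω ⊆ C → ¬ DComplete d Ω →
    ∃ (k : ℕ) (Ωs : Fin k → Finset (Finset α)), 2 ≤ k ∧
      (∀ i, IsCycle d (Ωs i) ∧ Ωs i ⊆ C) ∧
      (∀ F ∈ Ω, ∃ i, F ∈ Ωs i) ∧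
      (∀ F ∈ Ω, Odd ((Finset.univ.filter fun i => F ∈ Ωs i).card)) ∧
      (∀ F : Finset α, (∃ i, F ∈ Ωs i) → F ∉ Ω →
        Even ((Finset.univ.filter fun i => F ∈ Ωs i).card)) ∧
      ∀ i, vertexSet (Ωs i) ⊂ vertexSet Ω

/-- The circuits of `D` admit an admissible order. -/
def HasAdmissibleOrder (D : Finset (Finset α)) : Prop :=
  ∃ (t : ℕ) (F : Fin t → Finset α), Function.Injective F ∧
    (∀ G, G ∈ D ↔ ∃ i, F i = G) ∧
    ∀ i j : Fin t, j < i →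
      ∃ l ∈ F j \ F i, ∃ k : Fin t, k < i ∧ F k \ F i = {l}

/-- Contraction `D/v` of a (not necessarily uniform) clutter: the minimal sets of
`{ e \ {v} | e ∈ D }`. -/
def contractAux (D : Finset (Finset α)) (v : α) : Finset (Finset α) :=
  D.image fun e => e.erase v

def contract (D : Finset (Finset α)) (v : α) : Finset (Finset α) :=
  (contractAux D v).filter fun e => ∀ f ∈ contractAux D v, f ⊆ e → f = e

/-- `D` has a simplicial vertex (trivially true if `D` has no vertices). -/
def HasSimpVertex (D : Finset (Finset α)) : Prop :=
  vertexSet D = ∅ ∨ ∃ v ∈ vertexSet D, ∀ e₁ ∈ D, ∀ e₂ ∈ D, v ∈ e₁ → v ∈ e₂ →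
    ∃ e₃ ∈ D, e₃ ⊆ (e₁ ∪ e₂).erase v

/-- `D` is W-chordal: every clutter obtained from `D` by a sequence of vertex deletions
and contractions has a simplicial vertex. -/
def WChordal (D : Finset (Finset α)) : Prop :=
  ∀ D' : Finset (Finset α),
    Relation.ReflTransGen (fun X Y => ∃ v, Y = delVert X v ∨ Y = contract X v) D D' →
    HasSimpVertex D'

lemma mem_complexOf {D : Finset (Finset α)} {G : Finset α} :
    G ∈ complexOf D ↔ ∃ F ∈ D, G ⊆ F := by
  simp [complexOf]

lemma complexOf_down {D : Finset (Finset α)} {G G' : Finset α}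
    (h : G ∈ complexOf D) (h' : G' ⊆ G) : G' ∈ complexOf D := by
  rw [mem_complexOf] at *
  obtain ⟨F, hF, hGF⟩ := h
  exact ⟨F, hF, h'.trans hGF⟩

lemma mem_Gamma {V : Finset α} {c : ℕ} {C : Finset (Finset α)} {G : Finset α} :
    G ∈ complexOf (clutterDual V c C) ↔
      ∃ F, F ⊆ V ∧ F.card = c ∧ F ∉ C ∧ G ⊆ V \ F := by
  simp only [mem_complexOf, clutterDual, compClutter, Finset.mem_image, Finset.mem_sdiff,
    Finset.mem_powersetCard]
  constructor
  · rintro ⟨_, ⟨F, ⟨⟨hFV, hFc⟩, hFC⟩, rfl⟩, hG⟩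
    exact ⟨F, hFV, hFc, hFC, hG⟩
  · rintro ⟨F, h1, h2, h3, h4⟩
    exact ⟨V \ F, ⟨F, ⟨⟨h1, h2⟩, h3⟩, rfl⟩, h4⟩

lemma mem_facets_link {V : Finset α} {d : ℕ} {C : Finset (Finset α)}
    (hC : IsClutter V (d + 1) C) {v : α} {e : Finset α} :
    e ∈ facets (link (complexOf C) v) ↔ v ∉ e ∧ insert v e ∈ C := by
  rw [facets, Finset.mem_filter]
  simp only [link, Finset.mem_filter, Finset.mem_image]
  constructor
  · rintro ⟨⟨S, ⟨hS, hvS⟩, rfl⟩, hmax⟩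
    rw [mem_complexOf] at hS
    obtain ⟨H, hHC, hSH⟩ := hS
    have hvH : v ∈ H := hSH hvS
    have hHlink : ∃ x, (x ∈ complexOf C ∧ v ∈ x) ∧ x.erase v = H.erase v :=
      ⟨H, ⟨mem_complexOf.2 ⟨H, hHC, Finset.Subset.refl _⟩, hvH⟩, rfl⟩
    have heq := hmax (H.erase v) hHlink (Finset.erase_subset_erase v hSH)
    refine ⟨Finset.notMem_erase v S, ?_⟩
    rw [heq, Finset.insert_erase hvH]
    exact hHC
  · rintro ⟨hve, hins⟩
    have hcards : e.card = d := by
      have := (hC _ hins).2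
      rw [Finset.card_insert_of_notMem hve] at this
      omega
    constructor
    · exact ⟨insert v e, ⟨mem_complexOf.2 ⟨insert v e, hins, Finset.Subset.refl _⟩,
        Finset.mem_insert_self v e⟩, Finset.erase_insert hve⟩
    · rintro e' ⟨S, ⟨hS, hvS⟩, rfl⟩ hsub
      rw [mem_complexOf] at hS
      obtain ⟨H, hHC, hSH⟩ := hS
      have hcard' : (S.erase v).card ≤ d := by
        have h1 : S.erase v ⊆ H.erase v := Finset.erase_subset_erase v hSH
        have h2 : (H.erase v).card = d := by
          rw [Finset.card_erase_of_mem (hSH hvS), (hC _ hHC).2]; omega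
        exact h2 ▸ Finset.card_le_card h1
      exact Finset.eq_of_subset_of_card_le hsub (by omega)

/-- With `C` a non-complete `d`-clutter on `V`, `Δ = ⟨C⟩`, `Γ = ⟨C^∨⟩`, `v` a
shedding vertex of `Γ` and `D = Facets(link_Δ(v))`, one has `⟨D^∨⟩ = Γ − v`, where `D^∨`
is computed on the vertex set `V \ {v}`. -/
theorem complexOf_dual_facets_link (V : Finset α) (d : ℕ) (C : Finset (Finset α))
    (hC : IsClutter V (d + 1) C) (hnc : C ≠ V.powersetCard (d + 1))
    (v : α) (hv : v ∈ V)
    (hshed : Shedding (complexOf (clutterDual V (d + 1) C)) v) :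
    complexOf (clutterDual (V.erase v) d (facets (link (complexOf C) v))) =
      delVert (complexOf (clutterDual V (d + 1) C)) v := by
  classical
  ext G
  simp only [delVert, Finset.mem_filter]
  constructor
  · intro hG
    rw [mem_Gamma] at hG
    obtain ⟨F, hFV, hFd, hFD, hGF⟩ := hG
    have hvF : v ∉ F := fun h => Finset.notMem_erase v V (hFV h)
    have hFC : insert v F ∉ C := fun hc => hFD ((mem_facets_link hC).2 ⟨hvF, hc⟩)
    refine ⟨mem_Gamma.2 ⟨insert v F, ?_, ?_, hFC, ?_⟩, ?_⟩
    · exact Finset.insert_subset hv (hFV.trans (Finset.erase_subset v V))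
    · rw [Finset.card_insert_of_notMem hvF, hFd]
    · intro x hx
      have hx' := hGF hx
      simp only [Finset.mem_sdiff, Finset.mem_erase, Finset.mem_insert] at hx' ⊢
      exact ⟨hx'.1.2, fun h => h.elim (fun h1 => hx'.1.1 h1) (fun h2 => hx'.2 h2)⟩
    · intro hvG
      have := hGF hvG
      simp [Finset.mem_sdiff, Finset.mem_erase] at this
  · rintro ⟨hGΓ, hvG⟩
    rw [mem_Gamma] at hGΓ
    obtain ⟨F', hF'V, hF'c, hF'C, hGF'⟩ := hGΓ
    suffices h : ∃ F'', F'' ⊆ V ∧ F''.card = d + 1 ∧ F'' ∉ C ∧ G ⊆ V \ F'' ∧ v ∈ F'' by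
      obtain ⟨F'', h1, h2, h3, h4, h5⟩ := h
      rw [mem_Gamma]
      refine ⟨F''.erase v, Finset.erase_subset_erase v h1, ?_, ?_, ?_⟩
      · rw [Finset.card_erase_of_mem h5, h2]; omega
      · intro hd
        have hfl := (mem_facets_link hC).1 hd
        rw [Finset.insert_erase h5] at hfl
        exact h3 hfl.2
      · intro x hx
        have hx' := h4 hx
        simp only [Finset.mem_sdiff, Finset.mem_erase] at hx' ⊢
        exact ⟨⟨fun hxv => hvG (hxv ▸ hx), hx'.1⟩, fun hc => hx'.2 hc.2⟩
    by_cases hvF' : v ∈ F'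
    · exact ⟨F', hF'V, hF'c, hF'C, hGF', hvF'⟩
    · have hVF' : V \ F' ∈ complexOf (clutterDual V (d + 1) C) :=
        mem_Gamma.2 ⟨F', hF'V, hF'c, hF'C, Finset.Subset.refl _⟩
      have hvV : v ∈ V \ F' := Finset.mem_sdiff.2 ⟨hv, hvF'⟩
      have helink : (V \ F').erase v ∈ link (complexOf (clutterDual V (d + 1) C)) v := by
        simp only [link, Finset.mem_image, Finset.mem_filter]
        exact ⟨V \ F', ⟨hVF', hvV⟩, rfl⟩
      have heΓ : (V \ F').erase v ∈ complexOf (clutterDual V (d + 1) C) :=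
        complexOf_down hVF' (Finset.erase_subset v _)
      have hedel : (V \ F').erase v ∈ delVert (complexOf (clutterDual V (d + 1) C)) v :=
        Finset.mem_filter.2 ⟨heΓ, Finset.notMem_erase v _⟩
      have hne := hshed _ helink
      rw [facets, Finset.mem_filter] at hne
      push_neg at hne
      obtain ⟨e', he'del, hee', hnee⟩ := hne hedel
      obtain ⟨he'Γ, hve'⟩ := Finset.mem_filter.1 he'del
      obtain ⟨F'', hF''V, hF''c, hF''C, he'F''⟩ := mem_Gamma.1 he'Γ
      have hcard0 : (V \ F').card = V.card - (d + 1) := by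
        rw [Finset.card_sdiff_of_subset hF'V, hF'c]
      have hcard1 : ((V \ F').erase v).card = (V \ F').card - 1 :=
        Finset.card_erase_of_mem hvV
      have hcard2 : (V \ F'').card = V.card - (d + 1) := by
        rw [Finset.card_sdiff_of_subset hF''V, hF''c]
      have hlt : ((V \ F').erase v).card < e'.card :=
        Finset.card_lt_card (Finset.ssubset_iff_subset_ne.2 ⟨hee', hnee⟩)
      have hle : e'.card ≤ (V \ F'').card := Finset.card_le_card he'F''
      have hpos : 0 < (V \ F').card := Finset.card_pos.2 ⟨v, hvV⟩
      have he'eq : e' = V \ F'' := Finset.eq_of_subset_of_card_le he'F'' (by omega)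
      have hvF'' : v ∈ F'' := by
        by_contra hcon
        exact hve' (he'eq ▸ Finset.mem_sdiff.2 ⟨hv, hcon⟩)
      have hGe : G ⊆ (V \ F').erase v := fun x hx =>
        Finset.mem_erase.2 ⟨fun hxv => hvG (hxv ▸ hx), hGF' hx⟩
      exact ⟨F'', hF''V, hF''c, hF''C, he'eq ▸ hGe.trans hee', hvF''⟩

end ClutterPaper
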